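/- Let D be a finite index type and S : D → Type a family of nonempty finite types. Let c ⊆ D be a finite set of indices, b ⊆ c, u = c \ b, and let a ⊆ D be disjoint from b. Let f be a conditional pmf of the a-coordinates given the b-coordinates, and let h and g be positive pmfs on ∏_{j∈c} S j with b-marginals h_b and g_b. Define the conditional replacement operator T by T(h)(x_a, x_b) = f(x_a | x_b) · h_b(x_b), a pmf on ∏_{j∈a∪b} S j. Then I(h; g) − I(T(h); T(g)) = ∑_{x_b} h_b(x_b) · I(h_{u|b}(·|x_b); g_{u|b}(·|x_b)) ≥ 0, where h_{u|b}(x_u|x_b) = h(x_u, x_b)/h_b(x_b). In particular I(T(h); T(g)) ≤ I(h; g), with equality if and only if h_{u|b} = g_{u|b} everywhere. -/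

import Mathlib

noncomputable section

variable {D : Type*}

/-- Configurations of the coordinates indexed by a finite set `c ⊆ D`. -/
abbrev Cfg (S : D → Type*) (c : Finset D) : Type _ := ∀ j : c, S j

/-- Kullback–Leibler divergence, with the convention `0 * log 0 = 0`. -/
def KLd {Z : Type*} [Fintype Z] (p q : Z → ℝ) : ℝ :=
  ∑ z, p z * Real.log (p z / q z)

/-- The `b`-marginal of a function `h` on the `c`-coordinates, for `b ⊆ c`. -/
def marg (S : D → Type*) [DecidableEq D] [∀ j, Fintype (S j)] [∀ j, DecidableEq (S j)]
    {b c : Finset D} (hbc : b ⊆ c) (h : Cfg S c → ℝ) : Cfg S b → ℝ :=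
  fun xb => ∑ x : Cfg S c, if (fun j : b => x ⟨j.1, hbc j.2⟩) = xb then h x else 0

/-- The conditional replacement operator `T (h) = f (x_a | x_b) * h_b (x_b)`. -/
def condRepl (S : D → Type*) [DecidableEq D] [∀ j, Fintype (S j)] [∀ j, DecidableEq (S j)]
    {a b c : Finset D} (hbc : b ⊆ c) (f : Cfg S a → Cfg S b → ℝ) (h : Cfg S c → ℝ) :
    Cfg S (a ∪ b) → ℝ :=
  fun x => f (fun j : a => x ⟨j.1, Finset.mem_union_left b j.2⟩)
             (fun j : b => x ⟨j.1, Finset.mem_union_right a j.2⟩) *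
           marg S hbc h (fun j : b => x ⟨j.1, Finset.mem_union_right a j.2⟩)

/-- Combine a configuration on `c \ b` with one on `b ⊆ c` into one on `c`. -/
def glue (S : D → Type*) [DecidableEq D] {b c : Finset D} (hbc : b ⊆ c)
    (xu : Cfg S (c \ b)) (xb : Cfg S b) : Cfg S c :=
  fun j => if hj : j.1 ∈ b then xb ⟨j.1, hj⟩
           else xu ⟨j.1, Finset.mem_sdiff.mpr ⟨j.2, hj⟩⟩

section Helpers

set_option linter.unusedSectionVars false

lemma gibbs {Z : Type*} [Fintype Z] (p q : Z → ℝ) (hp : ∀ z, 0 ≤ p z) (hq : ∀ z, 0 < q z)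
    (hps : ∑ z, p z = 1) (hqs : ∑ z, q z = 1) :
    0 ≤ KLd p q ∧ (KLd p q = 0 ↔ ∀ z, p z = q z) := by
  have key : ∀ z, p z - q z ≤ p z * Real.log (p z / q z) := by
    intro z
    rcases eq_or_lt_of_le (hp z) with h0 | h0
    · rw [← h0]; simp; linarith [(hq z).le]
    · have hlog : Real.log (q z / p z) ≤ q z / p z - 1 :=
        Real.log_le_sub_one_of_pos (div_pos (hq z) h0)
      have hrw : Real.log (p z / q z) = - Real.log (q z / p z) := by
        rw [← inv_div, Real.log_inv]
      have h1 : 1 - q z / p z ≤ Real.log (p z / q z) := by rw [hrw]; linarith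
      have := mul_le_mul_of_nonneg_left h1 h0.le
      have h2 : p z * (1 - q z / p z) = p z - q z := by field_simp
      linarith
  have hsum : (0:ℝ) ≤ ∑ z, (p z * Real.log (p z / q z) - (p z - q z)) := by
    apply Finset.sum_nonneg; intro z _; linarith [key z]
  have hexp : ∑ z, (p z * Real.log (p z / q z) - (p z - q z)) = KLd p q := by
    rw [Finset.sum_sub_distrib, Finset.sum_sub_distrib, hps, hqs, KLd]; ring
  refine ⟨by linarith, ?_, ?_⟩
  · intro h0
    have hz : ∀ z ∈ Finset.univ, (p z * Real.log (p z / q z) - (p z - q z)) = 0 := by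
      rw [← Finset.sum_eq_zero_iff_of_nonneg (fun z _ => by linarith [key z])]
      rw [hexp, h0]
    intro z
    have hz' := hz z (Finset.mem_univ z)
    by_contra hne
    rcases eq_or_lt_of_le (hp z) with h0' | h0'
    · rw [← h0'] at hz'; simp at hz'; exact absurd hz'.symm (ne_of_lt (hq z))
    · have hqp : q z / p z ≠ 1 := by
        intro h1
        exact hne ((div_eq_one_iff_eq h0'.ne').mp h1).symm
      have hlog : Real.log (q z / p z) < q z / p z - 1 :=
        Real.log_lt_sub_one_of_pos (div_pos (hq z) h0') hqp
      have hrw : Real.log (p z / q z) = - Real.log (q z / p z) := by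
        rw [← inv_div, Real.log_inv]
      have h1 : 1 - q z / p z < Real.log (p z / q z) := by rw [hrw]; linarith
      have := mul_lt_mul_of_pos_left h1 h0'
      have h2 : p z * (1 - q z / p z) = p z - q z := by field_simp
      linarith
  · intro hpq
    rw [KLd]
    apply Finset.sum_eq_zero
    intro z _
    rw [hpq z, div_self (hq z).ne']
    simp

variable [DecidableEq D] (S : D → Type*) [∀ j, Fintype (S j)] [∀ j, DecidableEq (S j)]
variable {a b c : Finset D}

def glueEquiv (hbc : b ⊆ c) : Cfg S (c \ b) × Cfg S b ≃ Cfg S c where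
  toFun p := glue S hbc p.1 p.2
  invFun x := (fun j => x ⟨j.1, (Finset.mem_sdiff.mp j.2).1⟩, fun j => x ⟨j.1, hbc j.2⟩)
  left_inv p := by
    refine Prod.ext ?_ ?_ <;> funext j
    · simp [glue, (Finset.mem_sdiff.mp j.2).2]
    · simp [glue, j.2]
  right_inv x := by
    funext j
    simp only [glue]
    split <;> rfl

lemma glue_restrict (hbc : b ⊆ c) (xu : Cfg S (c \ b)) (xb : Cfg S b) :
    (fun j : b => glue S hbc xu xb ⟨j.1, hbc j.2⟩) = xb := by
  funext j; simp [glue, j.2]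

lemma sum_glue (hbc : b ⊆ c) (F : Cfg S c → ℝ) :
    ∑ x, F x = ∑ xb : Cfg S b, ∑ xu : Cfg S (c \ b), F (glue S hbc xu xb) := by
  rw [← (glueEquiv S hbc).sum_comp, Fintype.sum_prod_type, Finset.sum_comm]
  rfl

lemma marg_eq (hbc : b ⊆ c) (h : Cfg S c → ℝ) (xb : Cfg S b) :
    marg S hbc h xb = ∑ xu : Cfg S (c \ b), h (glue S hbc xu xb) := by
  rw [marg, sum_glue S hbc]
  rw [Finset.sum_eq_single xb]
  · simp [glue_restrict]
  · intro b' _ hne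
    apply Finset.sum_eq_zero
    intro xu _
    rw [glue_restrict, if_neg hne]
  · simp

lemma marg_pos [∀ j, Nonempty (S j)] (hbc : b ⊆ c) {h : Cfg S c → ℝ}
    (hh : ∀ x, 0 < h x) (xb : Cfg S b) : 0 < marg S hbc h xb := by
  rw [marg_eq]
  exact Finset.sum_pos (fun _ _ => hh _) Finset.univ_nonempty

def glue2 (hab : Disjoint a b) : Cfg S a × Cfg S b ≃ Cfg S (a ∪ b) where
  toFun p := fun j => if hj : j.1 ∈ a then p.1 ⟨j.1, hj⟩
             else p.2 ⟨j.1, (Finset.mem_union.mp j.2).resolve_left hj⟩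
  invFun x := (fun j => x ⟨j.1, Finset.mem_union_left b j.2⟩,
               fun j => x ⟨j.1, Finset.mem_union_right a j.2⟩)
  left_inv p := by
    refine Prod.ext ?_ ?_ <;> funext j
    · simp [j.2]
    · have hj : j.1 ∉ a := fun hj => (Finset.disjoint_left.mp hab) hj j.2
      simp [hj]
  right_inv x := by
    funext j
    dsimp only
    split <;> rfl

lemma condRepl_glue2 (hbc : b ⊆ c) (hab : Disjoint a b) (f : Cfg S a → Cfg S b → ℝ)
    (h : Cfg S c → ℝ) (xa : Cfg S a) (xb : Cfg S b) :
    condRepl S hbc f h (glue2 S hab (xa, xb)) = f xa xb * marg S hbc h xb := by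
  have ha : (fun j : a => glue2 S hab (xa, xb) ⟨j.1, Finset.mem_union_left b j.2⟩) = xa := by
    funext j; simp [glue2, j.2]
  have hb : (fun j : b => glue2 S hab (xa, xb) ⟨j.1, Finset.mem_union_right a j.2⟩) = xb := by
    funext j
    have hj : j.1 ∉ a := fun hj => (Finset.disjoint_left.mp hab) hj j.2
    simp [glue2, hj]
  simp only [condRepl, ha, hb]

lemma KLd_condRepl [∀ j, Nonempty (S j)] (hbc : b ⊆ c) (hab : Disjoint a b)
    (f : Cfg S a → Cfg S b → ℝ) (hf0 : ∀ xa xb, 0 ≤ f xa xb) (hf1 : ∀ xb, ∑ xa, f xa xb = 1)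
    (h g : Cfg S c → ℝ) (hh : ∀ x, 0 < h x) (hg : ∀ x, 0 < g x) :
    KLd (condRepl S hbc f h) (condRepl S hbc f g) =
      ∑ xb : Cfg S b, marg S hbc h xb * Real.log (marg S hbc h xb / marg S hbc g xb) := by
  rw [KLd, ← (glue2 S hab).sum_comp, Fintype.sum_prod_type, Finset.sum_comm]
  refine Finset.sum_congr rfl fun xb _ => ?_
  have key : ∀ xa, condRepl S hbc f h (glue2 S hab (xa, xb)) *
      Real.log (condRepl S hbc f h (glue2 S hab (xa, xb)) /
        condRepl S hbc f g (glue2 S hab (xa, xb)))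
      = f xa xb * (marg S hbc h xb * Real.log (marg S hbc h xb / marg S hbc g xb)) := by
    intro xa
    rw [condRepl_glue2 S hbc hab, condRepl_glue2 S hbc hab]
    rcases eq_or_lt_of_le (hf0 xa xb) with h0 | h0
    · rw [← h0]; simp
    · rw [mul_div_mul_left _ _ h0.ne']; ring
  rw [Finset.sum_congr rfl fun xa _ => key xa, ← Finset.sum_mul, hf1 xb, one_mul]

end Helpers

/-- **The conditional replacement operator is a Kullback–Leibler contraction (Lemma 2).**
For positive pmfs `h`, `g` on the `c`-coordinates, with `b ⊆ c`, `u = c \ b`,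
`a` disjoint from `b`, and a conditional pmf `f` of the `a`-coordinates given the
`b`-coordinates, the divergence drop `I(h; g) − I(T h; T g)` equals
`∑_{x_b} h_b (x_b) * I(h_{u∣b} (·∣x_b); g_{u∣b} (·∣x_b)) ≥ 0`; in particular
`I(T h; T g) ≤ I(h; g)`, with equality iff `h_{u∣b} = g_{u∣b}` everywhere. -/
theorem condRepl_kl_contraction
    {D : Type*} [Fintype D] [DecidableEq D]
    (S : D → Type*) [∀ j, Fintype (S j)] [∀ j, DecidableEq (S j)] [∀ j, Nonempty (S j)]
    (a b c : Finset D) (hbc : b ⊆ c) (hab : Disjoint a b)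
    (f : Cfg S a → Cfg S b → ℝ)
    (hf0 : ∀ xa xb, 0 ≤ f xa xb) (hf1 : ∀ xb, ∑ xa, f xa xb = 1)
    (h g : Cfg S c → ℝ)
    (hhpos : ∀ x, 0 < h x) (hhsum : ∑ x, h x = 1)
    (hgpos : ∀ x, 0 < g x) (hgsum : ∑ x, g x = 1) :
    (KLd h g - KLd (condRepl S hbc f h) (condRepl S hbc f g) =
      ∑ xb : Cfg S b, marg S hbc h xb *
        KLd (fun xu : Cfg S (c \ b) => h (glue S hbc xu xb) / marg S hbc h xb)
            (fun xu : Cfg S (c \ b) => g (glue S hbc xu xb) / marg S hbc g xb)) ∧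
    (0 ≤ ∑ xb : Cfg S b, marg S hbc h xb *
        KLd (fun xu : Cfg S (c \ b) => h (glue S hbc xu xb) / marg S hbc h xb)
            (fun xu : Cfg S (c \ b) => g (glue S hbc xu xb) / marg S hbc g xb)) ∧
    (KLd (condRepl S hbc f h) (condRepl S hbc f g) ≤ KLd h g) ∧
    (KLd (condRepl S hbc f h) (condRepl S hbc f g) = KLd h g ↔
      ∀ (xb : Cfg S b) (xu : Cfg S (c \ b)),
        h (glue S hbc xu xb) / marg S hbc h xb =
          g (glue S hbc xu xb) / marg S hbc g xb) := by
  have hmh : ∀ xb, 0 < marg S hbc h xb := marg_pos S hbc hhpos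
  have hmg : ∀ xb, 0 < marg S hbc g xb := marg_pos S hbc hgpos
  have hTh := KLd_condRepl S hbc hab f hf0 hf1 h g hhpos hgpos
  have hKLhg : KLd h g = ∑ xb : Cfg S b, ∑ xu : Cfg S (c \ b),
      h (glue S hbc xu xb) * Real.log (h (glue S hbc xu xb) / g (glue S hbc xu xb)) := by
    rw [KLd, sum_glue S hbc]
  have key : KLd h g - KLd (condRepl S hbc f h) (condRepl S hbc f g) =
      ∑ xb : Cfg S b, marg S hbc h xb *
        KLd (fun xu : Cfg S (c \ b) => h (glue S hbc xu xb) / marg S hbc h xb)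
            (fun xu : Cfg S (c \ b) => g (glue S hbc xu xb) / marg S hbc g xb) := by
    rw [hKLhg, hTh, ← Finset.sum_sub_distrib]
    refine Finset.sum_congr rfl fun xb _ => ?_
    have hterm : ∀ xu : Cfg S (c \ b), marg S hbc h xb * ((h (glue S hbc xu xb) / marg S hbc h xb) *
        Real.log ((h (glue S hbc xu xb) / marg S hbc h xb) /
          (g (glue S hbc xu xb) / marg S hbc g xb)))
        = h (glue S hbc xu xb) * Real.log (h (glue S hbc xu xb) / g (glue S hbc xu xb))
          - h (glue S hbc xu xb) * Real.log (marg S hbc h xb / marg S hbc g xb) := by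
      intro xu
      have e1 : (h (glue S hbc xu xb) / marg S hbc h xb) /
          (g (glue S hbc xu xb) / marg S hbc g xb)
          = (h (glue S hbc xu xb) / g (glue S hbc xu xb)) /
            (marg S hbc h xb / marg S hbc g xb) := by
        field_simp
      rw [e1, Real.log_div (div_pos (hhpos _) (hgpos _)).ne' (div_pos (hmh xb) (hmg xb)).ne']
      have e2 : marg S hbc h xb * (h (glue S hbc xu xb) / marg S hbc h xb)
          = h (glue S hbc xu xb) := by
        rw [mul_comm]; exact div_mul_cancel₀ _ (hmh xb).ne'
      rw [← mul_assoc, e2, mul_sub]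
    have hx : marg S hbc h xb *
        KLd (fun xu : Cfg S (c \ b) => h (glue S hbc xu xb) / marg S hbc h xb)
            (fun xu : Cfg S (c \ b) => g (glue S hbc xu xb) / marg S hbc g xb)
        = ∑ xu : Cfg S (c \ b),
            (h (glue S hbc xu xb) * Real.log (h (glue S hbc xu xb) / g (glue S hbc xu xb))
              - h (glue S hbc xu xb) * Real.log (marg S hbc h xb / marg S hbc g xb)) := by
      rw [KLd, Finset.mul_sum]
      exact Finset.sum_congr rfl fun xu _ => hterm xu
    rw [hx, Finset.sum_sub_distrib, ← Finset.sum_mul, ← marg_eq S hbc h xb]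
  have hgibbs : ∀ xb : Cfg S b,
      0 ≤ KLd (fun xu : Cfg S (c \ b) => h (glue S hbc xu xb) / marg S hbc h xb)
            (fun xu : Cfg S (c \ b) => g (glue S hbc xu xb) / marg S hbc g xb) ∧
      (KLd (fun xu : Cfg S (c \ b) => h (glue S hbc xu xb) / marg S hbc h xb)
            (fun xu : Cfg S (c \ b) => g (glue S hbc xu xb) / marg S hbc g xb) = 0 ↔
        ∀ xu : Cfg S (c \ b), h (glue S hbc xu xb) / marg S hbc h xb =
          g (glue S hbc xu xb) / marg S hbc g xb) := fun xb =>
    gibbs _ _ (fun xu => div_nonneg (hhpos _).le (hmh xb).le)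
      (fun xu => div_pos (hgpos _) (hmg xb))
      (by rw [← Finset.sum_div, ← marg_eq S hbc h xb, div_self (hmh xb).ne'])
      (by rw [← Finset.sum_div, ← marg_eq S hbc g xb, div_self (hmg xb).ne'])
  have part2 : 0 ≤ ∑ xb : Cfg S b, marg S hbc h xb *
      KLd (fun xu : Cfg S (c \ b) => h (glue S hbc xu xb) / marg S hbc h xb)
          (fun xu : Cfg S (c \ b) => g (glue S hbc xu xb) / marg S hbc g xb) :=
    Finset.sum_nonneg fun xb _ => mul_nonneg (hmh xb).le (hgibbs xb).1
  refine ⟨key, part2, by linarith, ?_⟩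
  constructor
  · intro heq
    have hz : ∑ xb : Cfg S b, marg S hbc h xb *
        KLd (fun xu : Cfg S (c \ b) => h (glue S hbc xu xb) / marg S hbc h xb)
            (fun xu : Cfg S (c \ b) => g (glue S hbc xu xb) / marg S hbc g xb) = 0 := by
      linarith
    have hall := (Finset.sum_eq_zero_iff_of_nonneg
      (fun xb _ => mul_nonneg (hmh xb).le (hgibbs xb).1)).mp hz
    intro xb xu
    have h0 := hall xb (Finset.mem_univ xb)
    have hk : KLd (fun xu : Cfg S (c \ b) => h (glue S hbc xu xb) / marg S hbc h xb)
        (fun xu : Cfg S (c \ b) => g (glue S hbc xu xb) / marg S hbc g xb) = 0 := by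
      rcases mul_eq_zero.mp h0 with h' | h'
      · exact absurd h' (hmh xb).ne'
      · exact h'
    exact ((hgibbs xb).2.mp hk) xu
  · intro hcond
    have hz : ∑ xb : Cfg S b, marg S hbc h xb *
        KLd (fun xu : Cfg S (c \ b) => h (glue S hbc xu xb) / marg S hbc h xb)
            (fun xu : Cfg S (c \ b) => g (glue S hbc xu xb) / marg S hbc g xb) = 0 :=
      Finset.sum_eq_zero fun xb _ => by rw [(hgibbs xb).2.mpr (hcond xb), mul_zero]
    linarith
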